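/- For all sufficiently large k, there exists a directed graph G_k on vertex set {2-element subsets of [k]} satisfying the triangular substructure property whose minimum dominating set has size at least k^{3/2}/(8√(log k)). -/

import Mathlib

open Finset
open scoped symmDiff

section Aux

variable {k q : ℕ}

private def adjP (q : ℕ) (p p' : ZMod q × ZMod q) : Prop :=
  p.1 ≠ p'.1 ∧ p.2 + p'.2 = p.1 * p'.1

private lemma adjP_symm {p p' : ZMod q × ZMod q} (h : adjP q p p') : adjP q p' p :=
  ⟨h.1.symm, by rw [add_comm, mul_comm]; exact h.2⟩

private def iot [NeZero q] (hqk : q * q ≤ k) (p : ZMod q × ZMod q) : Fin k :=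
  ⟨p.1.val * q + p.2.val, by
    have h1 := ZMod.val_lt p.1
    have h2 := ZMod.val_lt p.2
    have : p.1.val * q + p.2.val < q * q := by nlinarith
    omega⟩

private lemma iot_inj [NeZero q] (hqk : q * q ≤ k) :
    Function.Injective (iot (k := k) (q := q) hqk) := by
  intro p p' h
  have hv : p.1.val * q + p.2.val = p'.1.val * q + p'.2.val := congrArg Fin.val h
  have h2 := ZMod.val_lt p.2
  have h2' := ZMod.val_lt p'.2
  have hq0 : 0 < q := NeZero.pos q
  have hx : p.1.val = p'.1.val := by
    have e1 : (p.1.val * q + p.2.val) / q = p.1.val := by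
      rw [mul_comm, Nat.mul_add_div hq0, Nat.div_eq_of_lt h2, add_zero]
    have e2 : (p'.1.val * q + p'.2.val) / q = p'.1.val := by
      rw [mul_comm, Nat.mul_add_div hq0, Nat.div_eq_of_lt h2', add_zero]
    rw [← e1, ← e2, hv]
  have hy : p.2.val = p'.2.val := by rw [hx] at hv; exact Nat.add_left_cancel hv
  exact Prod.ext (ZMod.val_injective q hx) (ZMod.val_injective q hy)

private def Hgen (q : ℕ) [NeZero q] : Finset (ZMod q × ZMod q × ZMod q) :=
  univ ×ˢ univ ×ˢ (univ.erase 0)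

private lemma mem_Hgen [NeZero q] {t : ZMod q × ZMod q × ZMod q} :
    t ∈ Hgen q ↔ t.2.2 ≠ 0 := by
  simp [Hgen]

private def Hmap [NeZero q] (hqk : q * q ≤ k) (t : ZMod q × ZMod q × ZMod q) :
    Finset (Fin k) :=
  {iot hqk (t.1, t.2.1), iot hqk (t.1 + t.2.2, t.1 * (t.1 + t.2.2) - t.2.1)}

private def HH [NeZero q] (hqk : q * q ≤ k) : Finset (Finset (Fin k)) :=
  (Hgen q).image (Hmap hqk)

/- pair lemmas -/
private lemma pair_eq_pair {α : Type*} [DecidableEq α] {a b c d : α}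
    (h : ({a, b} : Finset α) = {c, d}) : (a = c ∧ b = d) ∨ (a = d ∧ b = c) := by
  have ha : a ∈ ({c, d} : Finset α) := by rw [← h]; simp
  have hb : b ∈ ({c, d} : Finset α) := by rw [← h]; simp
  have hc : c ∈ ({a, b} : Finset α) := by rw [h]; simp
  have hd : d ∈ ({a, b} : Finset α) := by rw [h]; simp
  simp only [mem_insert, mem_singleton] at ha hb hc hd
  rcases ha with h1 | h1
  · rcases hb with h2 | h2
    · -- a = c, b = c
      rcases hd with h3 | h3
      · exact Or.inl ⟨h1, h2.trans (h1.symm.trans h3.symm)⟩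
      · exact Or.inl ⟨h1, h3.symm⟩
    · exact Or.inl ⟨h1, h2⟩
  · rcases hb with h2 | h2
    · exact Or.inr ⟨h1, h2⟩
    · -- a = d, b = d
      rcases hc with h3 | h3
      · exact Or.inr ⟨h1, h2.trans (h1.symm.trans h3.symm)⟩
      · exact Or.inl ⟨h1.trans (h2.symm.trans h3.symm), h2⟩

private lemma pair_card {α : Type*} [DecidableEq α] {a b : α} (h : a ≠ b) :
    ({a, b} : Finset α).card = 2 := by
  rw [card_insert_of_notMem (by simp [h]), card_singleton]

private lemma pair_inter {α : Type*} [DecidableEq α] {s t w : α}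
    (hts : t ≠ s) (hws : w ≠ s) (htw : t ≠ w) :
    ({s, t} : Finset α) ∩ {s, w} = {s} := by
  ext x
  simp only [mem_inter, mem_insert, mem_singleton]
  constructor
  · rintro ⟨h1 | h1, h2 | h2⟩ <;> subst h1 <;> first | rfl | (exfalso; tauto)
  · rintro rfl; exact ⟨Or.inl rfl, Or.inl rfl⟩

private lemma pair_symmDiff {α : Type*} [DecidableEq α] {s t w : α}
    (hts : t ≠ s) (hws : w ≠ s) (htw : t ≠ w) :
    ({s, t} : Finset α) ∆ {s, w} = {t, w} := by
  ext x
  simp only [Finset.mem_symmDiff, mem_inter, mem_insert, mem_singleton, not_or]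
  constructor
  · rintro (⟨h1 | h1, h2⟩ | ⟨h1 | h1, h2⟩) <;> tauto
  · rintro (rfl | rfl)
    · exact Or.inl ⟨Or.inr rfl, by tauto⟩
    · exact Or.inr ⟨Or.inr rfl, by tauto⟩

private lemma exists_other {α : Type*} [DecidableEq α] {e : Finset α} {s : α}
    (h2 : e.card = 2) (hs : s ∈ e) : ∃ w, w ≠ s ∧ e = {s, w} := by
  obtain ⟨x, y, hxy, rfl⟩ := Finset.card_eq_two.mp h2
  simp only [mem_insert, mem_singleton] at hs
  rcases hs with rfl | rfl
  · exact ⟨y, fun h => hxy h.symm, rfl⟩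
  · exact ⟨x, fun h => hxy h, by rw [Finset.pair_comm]⟩

private lemma Hmap_ne [NeZero q] (hqk : q * q ≤ k) {t : ZMod q × ZMod q × ZMod q}
    (ht : t.2.2 ≠ 0) :
    iot hqk (t.1, t.2.1) ≠ iot hqk (t.1 + t.2.2, t.1 * (t.1 + t.2.2) - t.2.1) := by
  intro h
  have h0 := iot_inj hqk h
  have h1 : t.1 = t.1 + t.2.2 := (Prod.ext_iff.mp h0).1
  exact ht (by linear_combination -h1)

private lemma HH_card2 [NeZero q] (hqk : q * q ≤ k) {e : Finset (Fin k)}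
    (he : e ∈ HH hqk) : e.card = 2 := by
  obtain ⟨t, ht, rfl⟩ := Finset.mem_image.mp he
  exact pair_card (Hmap_ne hqk (mem_Hgen.mp ht))

private lemma exists_rep [NeZero q] (hqk : q * q ≤ k) {x y : Fin k}
    (h : ({x, y} : Finset (Fin k)) ∈ HH hqk) :
    ∃ p r, adjP q p r ∧ x = iot hqk p ∧ y = iot hqk r := by
  obtain ⟨t, ht, he⟩ := Finset.mem_image.mp h
  have hδ : t.2.2 ≠ 0 := mem_Hgen.mp ht
  have hadj : adjP q (t.1, t.2.1) (t.1 + t.2.2, t.1 * (t.1 + t.2.2) - t.2.1) := by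
    refine ⟨?_, by ring⟩
    intro h1
    simp only at h1
    exact hδ (by linear_combination -h1)
  rcases pair_eq_pair he.symm with ⟨h1, h2⟩ | ⟨h1, h2⟩
  · exact ⟨_, _, hadj, h1, h2⟩
  · exact ⟨_, _, adjP_symm hadj, h1, h2⟩

private lemma adj_unique (hq : q.Prime) {p₁ p₂ r r' : ZMod q × ZMod q} (h12 : p₁ ≠ p₂)
    (a1 : adjP q p₁ r) (a2 : adjP q p₂ r) (a3 : adjP q p₁ r') (a4 : adjP q p₂ r') :
    r = r' := by
  haveI : Fact q.Prime := ⟨hq⟩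
  by_cases hx : p₁.1 = p₂.1
  · exfalso
    have e1 := a1.2
    have e2 := a2.2
    rw [hx] at e1
    have h : p₁.2 + r.2 = p₂.2 + r.2 := by rw [e1, e2]
    exact h12 (Prod.ext hx (add_right_cancel h))
  · have hsub : (p₁.1 - p₂.1) * r.1 = p₁.2 - p₂.2 := by linear_combination a2.2 - a1.2
    have hsub' : (p₁.1 - p₂.1) * r'.1 = p₁.2 - p₂.2 := by linear_combination a4.2 - a3.2
    have hne : p₁.1 - p₂.1 ≠ 0 := sub_ne_zero.mpr hx
    have h1 : r.1 = r'.1 := mul_left_cancel₀ hne (hsub.trans hsub'.symm)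
    have h2 : r.2 = r'.2 := by
      have e1 := a1.2
      have e3 := a3.2
      have h : p₁.2 + r.2 = p₁.2 + r'.2 := by rw [e1, e3, h1]
      exact add_left_cancel h
    exact Prod.ext h1 h2

private lemma HH_codeg (hq : q.Prime) [NeZero q] (hqk : q * q ≤ k) {s t w w' : Fin k}
    (hst : s ≠ t) (h1 : ({s, w} : Finset (Fin k)) ∈ HH hqk)
    (h2 : ({t, w} : Finset (Fin k)) ∈ HH hqk)
    (h3 : ({s, w'} : Finset (Fin k)) ∈ HH hqk)
    (h4 : ({t, w'} : Finset (Fin k)) ∈ HH hqk) :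
    w = w' := by
  obtain ⟨p1, r1, ha1, hs1, hw1⟩ := exists_rep hqk h1
  obtain ⟨p2, r2, ha2, ht2, hw2⟩ := exists_rep hqk h2
  obtain ⟨p3, r3, ha3, hs3, hw3⟩ := exists_rep hqk h3
  obtain ⟨p4, r4, ha4, ht4, hw4⟩ := exists_rep hqk h4
  have inj := iot_inj (k := k) (q := q) hqk
  have hr21 : r2 = r1 := inj (hw2.symm.trans hw1)
  have hp31 : p3 = p1 := inj (hs3.symm.trans hs1)
  have hp42 : p4 = p2 := inj (ht4.symm.trans ht2)
  have hr43 : r4 = r3 := inj (hw4.symm.trans hw3)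
  have hp12 : p1 ≠ p2 := by
    intro h
    exact hst (hs1.trans (by rw [h, ← ht2]))
  rw [hr21] at ha2
  rw [hp31] at ha3
  rw [hp42, hr43] at ha4
  have : r1 = r3 := adj_unique hq hp12 ha1 ha2 ha3 ha4
  rw [hw1, hw3, this]

private lemma Hgen_card [NeZero q] : (Hgen q).card = q * (q * (q - 1)) := by
  have h0 : (univ.erase (0 : ZMod q)).card = q - 1 := by
    rw [card_erase_of_mem (mem_univ _), card_univ, ZMod.card]
  simp [Hgen, card_product, card_univ, ZMod.card, h0]

/-- double counting target: pairs (e, x) with x ∈ e -/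
private lemma card_pairs {α : Type*} [DecidableEq α] (T : Finset (Finset α))
    (h2 : ∀ e ∈ T, (e : Finset α).card = 2) :
    (T.biUnion (fun e => {e} ×ˢ e)).card = 2 * T.card := by
  rw [Finset.card_biUnion]
  · rw [Finset.sum_congr rfl (fun e he => by
      rw [Finset.card_product, Finset.card_singleton, one_mul, h2 e he])]
    rw [Finset.sum_const, smul_eq_mul, mul_comm]
  · intro x hx y hy hxy
    dsimp only [Function.onFun]
    rw [Finset.disjoint_left]
    rintro ⟨e, v⟩ hmem hmem'
    rw [Finset.mem_product, Finset.mem_singleton] at hmem hmem'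
    exact hxy (hmem.1.symm.trans hmem'.1)

private lemma HH_lb [NeZero q] (hqk : q * q ≤ k) :
    q * (q * (q - 1)) ≤ 2 * (HH hqk).card := by
  have hmaps : ∀ t ∈ Hgen q,
      ((Hmap hqk t, iot hqk (t.1, t.2.1)) : Finset (Fin k) × Fin k)
        ∈ (HH hqk).biUnion (fun e => {e} ×ˢ e) := by
    intro t ht
    rw [Finset.mem_biUnion]
    refine ⟨Hmap hqk t, Finset.mem_image_of_mem _ ht, ?_⟩
    rw [Finset.mem_product, Finset.mem_singleton]
    exact ⟨rfl, by simp [Hmap]⟩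
  have hinj : Set.InjOn (fun t => ((Hmap hqk t, iot hqk (t.1, t.2.1)) :
      Finset (Fin k) × Fin k)) (Hgen q) := by
    intro t ht t' ht' h
    have hmap : Hmap hqk t = Hmap hqk t' := congrArg Prod.fst h
    have hfst : iot hqk (t.1, t.2.1) = iot hqk (t'.1, t'.2.1) := congrArg Prod.snd h
    have hfst' := iot_inj hqk hfst
    have hx : t.1 = t'.1 := (Prod.ext_iff.mp hfst').1
    have hy : t.2.1 = t'.2.1 := (Prod.ext_iff.mp hfst').2
    have hB : iot hqk (t.1 + t.2.2, t.1 * (t.1 + t.2.2) - t.2.1) ∈ Hmap hqk t' := by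
      rw [← hmap]; simp [Hmap]
    simp only [Hmap, mem_insert, mem_singleton] at hB
    rcases hB with hB | hB
    · exfalso
      have h0 := iot_inj hqk hB
      have h1 : t.1 + t.2.2 = t'.1 := (Prod.ext_iff.mp h0).1
      rw [← hx] at h1
      exact (mem_Hgen.mp ht) (by linear_combination h1)
    · have h0 := iot_inj hqk hB
      have h1 : t.1 + t.2.2 = t'.1 + t'.2.2 := congrArg Prod.fst h0
      rw [← hx] at h1
      have hz : t.2.2 = t'.2.2 := by linear_combination h1
      exact Prod.ext hx (Prod.ext hy hz)
  have hcard := Finset.card_le_card_of_injOn _ hmaps hinj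
  rw [Hgen_card, card_pairs _ (fun e he => HH_card2 hqk he)] at hcard
  exact hcard

/- the priority function -/
private noncomputable def sig [NeZero q] (hqk : q * q ≤ k) (s : Finset (Fin k)) : ℕ :=
  ((Fintype.equivFin (Finset (Fin k))) s).val +
    (if s ∈ HH hqk then Fintype.card (Finset (Fin k)) else 0)

private lemma sig_ne [NeZero q] (hqk : q * q ≤ k) {s t : Finset (Fin k)} (hst : s ≠ t) :
    sig hqk s ≠ sig hqk t := by
  intro h
  have hls := ((Fintype.equivFin (Finset (Fin k))) s).isLt
  have hlt := ((Fintype.equivFin (Finset (Fin k))) t).isLt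
  unfold sig at h
  have key : ((Fintype.equivFin (Finset (Fin k))) s) = ((Fintype.equivFin (Finset (Fin k))) t) := by
    by_cases hs : s ∈ HH hqk <;> by_cases ht : t ∈ HH hqk
    · rw [if_pos hs, if_pos ht] at h; exact Fin.ext (by omega)
    · rw [if_pos hs, if_neg ht] at h; exact Fin.ext (by omega)
    · rw [if_neg hs, if_pos ht] at h; exact Fin.ext (by omega)
    · rw [if_neg hs, if_neg ht] at h; exact Fin.ext (by omega)
  exact hst ((Fintype.equivFin (Finset (Fin k))).injective key)

private lemma sig_top [NeZero q] (hqk : q * q ≤ k) {e v : Finset (Fin k)}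
    (he : e ∈ HH hqk) (hlt : sig hqk e < sig hqk v) : v ∈ HH hqk := by
  by_contra hv
  have hlv := ((Fintype.equivFin (Finset (Fin k))) v).isLt
  unfold sig at hlt
  rw [if_pos he, if_neg hv] at hlt
  omega

end Aux

/-- For all sufficiently large `k`, there is a digraph on the 2-element subsets of
`[k]` satisfying the triangular substructure property, all of whose dominating sets
have size at least `k^{3/2} / (8 √(log₂ k))`. -/
theorem stmt_10 :
    ∃ k0 : ℕ, ∀ k : ℕ, k0 ≤ k →
      ∃ E : Finset (Fin k) → Finset (Fin k) → Prop,
        (∀ a b c : Fin k, a ≠ b → a ≠ c → b ≠ c →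
          (E {a, c} {b, c} ∧ E {b, c} {a, c}) ∨ E {a, b} {a, c} ∨ E {a, b} {b, c}) ∧
        ∀ D : Finset (Finset (Fin k)),
          D ⊆ Finset.univ.filter (fun s : Finset (Fin k) => s.card = 2) →
          (∀ v : Finset (Fin k), v.card = 2 → v ∈ D ∨ ∃ u ∈ D, E u v) →
          (k : ℝ) ^ ((3 : ℝ) / 2) / (8 * Real.sqrt (Real.logb 2 k)) ≤ D.card := by
  refine ⟨2 ^ 1048576, fun k hk => ?_⟩
  have h2pos : (0 : ℕ) < 2 ^ 1048576 := pow_pos (by norm_num) _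
  have hk0 : 0 < k := lt_of_lt_of_le h2pos hk
  have h64 : 64 ≤ k := by
    calc (64 : ℕ) = 2 ^ 6 := by norm_num
      _ ≤ 2 ^ 1048576 := Nat.pow_le_pow_right (by norm_num) (by norm_num)
      _ ≤ k := hk
  have hklogb : (1048576 : ℝ) ≤ Real.logb 2 k := by
    have h1 : ((2 ^ 1048576 : ℕ) : ℝ) ≤ (k : ℝ) := Nat.cast_le.mpr hk
    have h2 : ((2 ^ 1048576 : ℕ) : ℝ) = (2 : ℝ) ^ (1048576 : ℕ) := by push_cast; ring
    have h3 : Real.logb 2 ((2 : ℝ) ^ (1048576 : ℕ)) = 1048576 := by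
      rw [Real.logb_pow, Real.logb_self_eq_one (by norm_num)]
      norm_num
    calc (1048576 : ℝ) = Real.logb 2 ((2 : ℝ) ^ (1048576 : ℕ)) := h3.symm
      _ ≤ Real.logb 2 (k : ℝ) :=
          Real.logb_le_logb_of_le (by norm_num) (by positivity) (h2 ▸ h1)
  clear hk h2pos
  have hS8 : 8 ≤ Nat.sqrt k := Nat.le_sqrt.mpr (by omega)
  obtain ⟨q, hqp, hql, hqu⟩ := Nat.exists_prime_lt_and_le_two_mul (Nat.sqrt k / 8) (by omega)
  haveI : Fact q.Prime := ⟨hqp⟩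
  haveI : NeZero q := ⟨hqp.pos.ne'⟩
  have hq2 : 2 ≤ q := hqp.two_le
  have hqS : q ≤ Nat.sqrt k := by omega
  have hqk : q * q ≤ k := le_trans (Nat.mul_le_mul hqS hqS) (Nat.sqrt_le k)
  have hkq : k ≤ 64 * q ^ 2 := by
    have h1 : k < (Nat.sqrt k + 1) * (Nat.sqrt k + 1) := Nat.lt_succ_sqrt k
    have h2 : Nat.sqrt k + 1 ≤ 8 * q := by omega
    have h3 : k < 64 * q ^ 2 :=
      calc k < (Nat.sqrt k + 1) * (Nat.sqrt k + 1) := h1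
        _ ≤ (8 * q) * (8 * q) := Nat.mul_le_mul h2 h2
        _ = 64 * q ^ 2 := by ring
    exact h3.le
  refine ⟨fun u v => (u ∩ v).card = 1 ∧ sig hqk v < sig hqk (u ∆ v), ?_, ?_⟩
  · -- triangular property
    intro a b c hab hac hbc
    have hne : ({a, c} : Finset (Fin k)) ≠ {b, c} := by
      intro h
      have hmem : a ∈ ({b, c} : Finset (Fin k)) := by rw [← h]; simp
      simp only [mem_insert, mem_singleton] at hmem
      rcases hmem with h' | h'
      · exact hab h'
      · exact hac h'
    have hi1 : ({a, b} : Finset (Fin k)) ∩ {a, c} = {a} :=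
      pair_inter (Ne.symm hab) (Ne.symm hac) hbc
    have hd1 : ({a, b} : Finset (Fin k)) ∆ {a, c} = {b, c} :=
      pair_symmDiff (Ne.symm hab) (Ne.symm hac) hbc
    have hcomm : ({a, b} : Finset (Fin k)) = {b, a} := Finset.pair_comm a b
    have hi2 : ({a, b} : Finset (Fin k)) ∩ {b, c} = {b} := by
      rw [hcomm]; exact pair_inter hab (Ne.symm hbc) hac
    have hd2 : ({a, b} : Finset (Fin k)) ∆ {b, c} = {a, c} := by
      rw [hcomm]; exact pair_symmDiff hab (Ne.symm hbc) hac
    rcases (sig_ne hqk hne).lt_or_gt with h | h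
    · refine Or.inr (Or.inl ⟨by rw [hi1]; exact Finset.card_singleton a, ?_⟩)
      rw [hd1]; exact h
    · refine Or.inr (Or.inr ⟨by rw [hi2]; exact Finset.card_singleton b, ?_⟩)
      rw [hd2]; exact h
  · -- domination lower bound
    intro D hD hdom
    classical
    have hD2 : ∀ u ∈ D, (u : Finset (Fin k)).card = 2 := fun u hu =>
      (Finset.mem_filter.mp (hD hu)).2
    set F : Finset (Fin k) → (Finset (Fin k) × Fin k) := fun e =>
      if h : ∃ u, u ∈ D ∧ ((u ∩ e).card = 1 ∧ sig hqk e < sig hqk (u ∆ e)) then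
        (h.choose, (h.choose ∩ e).min'
          (Finset.card_pos.mp (by rw [h.choose_spec.2.1]; exact Nat.one_pos)))
      else (∅, ⟨0, hk0⟩) with hFdef
    have hcov : ∀ e ∈ HH hqk \ D,
        ∃ u, u ∈ D ∧ ((u ∩ e).card = 1 ∧ sig hqk e < sig hqk (u ∆ e)) := by
      intro e he
      obtain ⟨heH, heD⟩ := Finset.mem_sdiff.mp he
      rcases hdom e (HH_card2 hqk heH) with h | h
      · exact absurd h heD
      · exact h
    have hstruct : ∀ e ∈ HH hqk \ D,
        ∀ hex : ∃ u, u ∈ D ∧ ((u ∩ e).card = 1 ∧ sig hqk e < sig hqk (u ∆ e)),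
        ∀ s ∈ hex.choose ∩ e,
        ∃ t w, t ≠ s ∧ w ≠ s ∧ t ≠ w ∧ hex.choose = {s, t} ∧ e = {s, w} ∧
          ({s, w} : Finset (Fin k)) ∈ HH hqk ∧ ({t, w} : Finset (Fin k)) ∈ HH hqk := by
      intro e he hex s hs
      obtain ⟨heH, heD⟩ := Finset.mem_sdiff.mp he
      obtain ⟨hu, h1, hsig⟩ := hex.choose_spec
      obtain ⟨hsu, hse⟩ := Finset.mem_inter.mp hs
      obtain ⟨t, hts, hu_eq⟩ := exists_other (hD2 _ hu) hsu
      obtain ⟨w, hws, he_eq⟩ := exists_other (HH_card2 hqk heH) hse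
      have htw : t ≠ w := by
        intro h
        apply heD
        rw [he_eq, ← h, ← hu_eq]
        exact hu
      have hΔ : hex.choose ∆ e = {t, w} := by
        rw [hu_eq, he_eq]; exact pair_symmDiff hts hws htw
      have h_tw : ({t, w} : Finset (Fin k)) ∈ HH hqk := by
        rw [← hΔ]; exact sig_top hqk heH hsig
      exact ⟨t, w, hts, hws, htw, hu_eq, he_eq, by rw [← he_eq]; exact heH, h_tw⟩
    have hmaps : ∀ e ∈ HH hqk \ D, F e ∈ D.biUnion (fun u => {u} ×ˢ u) := by
      intro e he
      have hex := hcov e he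
      rw [hFdef]
      simp only [dif_pos hex]
      rw [Finset.mem_biUnion]
      refine ⟨hex.choose, hex.choose_spec.1, ?_⟩
      rw [Finset.mem_product, Finset.mem_singleton]
      have hne1 : (hex.choose ∩ e).Nonempty :=
        Finset.card_pos.mp (by rw [hex.choose_spec.2.1]; exact Nat.one_pos)
      exact ⟨rfl, (Finset.mem_inter.mp (Finset.min'_mem _ hne1)).1⟩
    have hinj : Set.InjOn F ((HH hqk \ D : Finset (Finset (Fin k))) : Set (Finset (Fin k))) := by
      intro e1 he1' e2 he2' hF12
      have he1 : e1 ∈ HH hqk \ D := Finset.mem_coe.mp he1'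
      have he2 : e2 ∈ HH hqk \ D := Finset.mem_coe.mp he2'
      have hex1 := hcov e1 he1
      have hex2 := hcov e2 he2
      rw [hFdef] at hF12
      simp only [dif_pos hex1, dif_pos hex2] at hF12
      have hu12 : hex1.choose = hex2.choose := congrArg Prod.fst hF12
      have hs12 := congrArg Prod.snd hF12
      simp only at hu12 hs12
      set s : Fin k := (hex1.choose ∩ e1).min'
        (Finset.card_pos.mp (by rw [hex1.choose_spec.2.1]; exact Nat.one_pos)) with hs_def
      have hs1 : s ∈ hex1.choose ∩ e1 := Finset.min'_mem _
        (Finset.card_pos.mp (by rw [hex1.choose_spec.2.1]; exact Nat.one_pos))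
      have hs2 : s ∈ hex2.choose ∩ e2 := by
        have hmm := Finset.min'_mem (hex2.choose ∩ e2)
          (Finset.card_pos.mp (by rw [hex2.choose_spec.2.1]; exact Nat.one_pos))
        rwa [← hs12] at hmm
      obtain ⟨t1, w1, ht1s, hw1s, ht1w1, hu1_eq, he1_eq, hsw1, htw1⟩ :=
        hstruct e1 he1 hex1 s hs1
      obtain ⟨t2, w2, ht2s, hw2s, ht2w2, hu2_eq, he2_eq, hsw2, htw2⟩ :=
        hstruct e2 he2 hex2 s hs2
      have ht12 : t1 = t2 := by
        have h := hu1_eq.symm.trans (hu12.trans hu2_eq)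
        rcases pair_eq_pair h with ⟨-, h2⟩ | ⟨h1, -⟩
        · exact h2
        · exact absurd h1.symm ht2s
      have hw12 : w1 = w2 := by
        apply HH_codeg hqp hqk (Ne.symm ht1s) hsw1 htw1 hsw2
        rw [ht12]
        exact htw2
      rw [he1_eq, he2_eq, hw12]
    have hcard1 : (HH hqk \ D).card ≤ (D.biUnion fun u => {u} ×ˢ u).card :=
      Finset.card_le_card_of_injOn F hmaps hinj
    have hcard2 : (D.biUnion fun u => {u} ×ˢ u).card = 2 * D.card :=
      card_pairs D hD2
    have hHD : (HH hqk).card ≤ 3 * D.card := by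
      have hsplit : (HH hqk ∩ D).card + (HH hqk \ D).card = (HH hqk).card :=
        Finset.card_inter_add_card_sdiff _ _
      have hint : (HH hqk ∩ D).card ≤ D.card :=
        Finset.card_le_card Finset.inter_subset_right
      omega
    have hq3 : q ^ 3 ≤ 12 * D.card := by
      have h1 : q * (q * (q - 1)) ≤ 2 * (HH hqk).card := HH_lb hqk
      have h3 : q ^ 3 ≤ 2 * (q * (q * (q - 1))) := by
        have hq' : q ≤ 2 * (q - 1) := by omega
        calc q ^ 3 = q * (q * q) := by ring
          _ ≤ q * (q * (2 * (q - 1))) :=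
            Nat.mul_le_mul_left _ (Nat.mul_le_mul_left _ hq')
          _ = 2 * (q * (q * (q - 1))) := by ring
      linarith
    -- real arithmetic
    have hcastk : (k : ℝ) ≤ (8 * (q : ℝ)) ^ 2 := by
      have h : (k : ℝ) ≤ 64 * (q : ℝ) ^ 2 := by exact_mod_cast hkq
      nlinarith [h]
    have hq0R : (0 : ℝ) ≤ 8 * (q : ℝ) := by positivity
    have hrp : (k : ℝ) ^ ((3 : ℝ) / 2) ≤ 512 * (q : ℝ) ^ 3 := by
      calc (k : ℝ) ^ ((3 : ℝ) / 2) ≤ ((8 * (q : ℝ)) ^ 2) ^ ((3 : ℝ) / 2) :=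
            Real.rpow_le_rpow (Nat.cast_nonneg k) hcastk (by norm_num)
        _ = ((8 * (q : ℝ)) ^ ((2 : ℕ) : ℝ)) ^ ((3 : ℝ) / 2) := by
            rw [Real.rpow_natCast]
        _ = (8 * (q : ℝ)) ^ (((2 : ℕ) : ℝ) * ((3 : ℝ) / 2)) :=
            (Real.rpow_mul hq0R _ _).symm
        _ = (8 * (q : ℝ)) ^ ((3 : ℕ) : ℝ) := by norm_num
        _ = (8 * (q : ℝ)) ^ (3 : ℕ) := Real.rpow_natCast _ 3
        _ = 512 * (q : ℝ) ^ 3 := by ring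
    have hsq : (1024 : ℝ) ≤ Real.sqrt (Real.logb 2 k) := by
      apply Real.le_sqrt_of_sq_le
      nlinarith [hklogb]
    have hsqpos : (0 : ℝ) < 8 * Real.sqrt (Real.logb 2 k) := by nlinarith [hsq]
    rw [div_le_iff₀ hsqpos]
    have hq3R : (q : ℝ) ^ 3 ≤ 12 * (D.card : ℝ) := by exact_mod_cast hq3
    have hDnn : (0 : ℝ) ≤ (D.card : ℝ) := Nat.cast_nonneg _
    calc (k : ℝ) ^ ((3 : ℝ) / 2) ≤ 512 * (q : ℝ) ^ 3 := hrp
      _ ≤ 512 * (12 * (D.card : ℝ)) := by linarith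
      _ = 6144 * (D.card : ℝ) := by ring
      _ ≤ (8 * 1024) * (D.card : ℝ) := by nlinarith [hDnn]
      _ ≤ (8 * Real.sqrt (Real.logb 2 k)) * (D.card : ℝ) := by nlinarith [hsq, hDnn]
      _ = (D.card : ℝ) * (8 * Real.sqrt (Real.logb 2 k)) := by ring
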